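/- Let S ⊆ ℂ be a finite set with at least two elements, d_min(S) = min{|x - x'| : x ≠ x' ∈ S}, and let z ∈ ℂ. Suppose that the effective minimum distance d_min(z) := min{|(x_A - x_A') + z·(x_B - x_B')| : (x_A,x_B) ≠ (x_A',x_B') ∈ S × S} satisfies d_min(z) ≥ min(d_min(S), |z|·d_min(S)). Then for EVERY map f : S × S → T satisfying the exclusive law, the minimum cluster distance of f at z equals min(d_min(S), |z|·d_min(S)); in particular all exclusive-law clusterings achieve the same minimum cluster distance at such z. -/

import Mathlib

/-- For a finite `S ⊆ ℂ` with at least two elements and `z ∈ ℂ` such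
that the effective minimum distance `d_min(z)` at `z` satisfies
`d_min(z) ≥ min(d_min(S), |z|·d_min(S))`, EVERY map `f : S × S → T` satisfying the
exclusive law has minimum cluster distance at `z` equal to
`min(d_min(S), |z|·d_min(S))`. -/
theorem min_cluster_distance_clustering_independent {T : Type*}
    (S : Finset ℂ) (hS : 2 ≤ S.card) (z : ℂ)
    (dminS : ℝ)
    (hdminS : dminS = sInf {r : ℝ | ∃ x ∈ S, ∃ x' ∈ S, x ≠ x' ∧ r = ‖x - x'‖})
    (dminz : ℝ)
    (hdminz : dminz = sInf {r : ℝ | ∃ xA ∈ S, ∃ xB ∈ S, ∃ xA' ∈ S, ∃ xB' ∈ S,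
      (xA, xB) ≠ (xA', xB') ∧ r = ‖(xA - xA') + z * (xB - xB')‖})
    (hbig : min dminS (‖z‖ * dminS) ≤ dminz)
    (f : ℂ → ℂ → T)
    (hex1 : ∀ x ∈ S, ∀ x' ∈ S, ∀ y ∈ S, x ≠ x' → f x y ≠ f x' y)
    (hex2 : ∀ x ∈ S, ∀ y ∈ S, ∀ y' ∈ S, y ≠ y' → f x y ≠ f x y') :
    sInf {r : ℝ | ∃ xA ∈ S, ∃ xB ∈ S, ∃ xA' ∈ S, ∃ xB' ∈ S,
        f xA xB ≠ f xA' xB' ∧ r = ‖(xA - xA') + z * (xB - xB')‖} =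
      min dminS (‖z‖ * dminS) := by
  obtain ⟨a, ha, b, hb, hab⟩ := Finset.one_lt_card.mp hS
  set C : Set ℝ := {r : ℝ | ∃ x ∈ S, ∃ x' ∈ S, x ≠ x' ∧ r = ‖x - x'‖} with hC
  set A : Set ℝ := {r : ℝ | ∃ xA ∈ S, ∃ xB ∈ S, ∃ xA' ∈ S, ∃ xB' ∈ S,
      f xA xB ≠ f xA' xB' ∧ r = ‖(xA - xA') + z * (xB - xB')‖} with hA
  set B : Set ℝ := {r : ℝ | ∃ xA ∈ S, ∃ xB ∈ S, ∃ xA' ∈ S, ∃ xB' ∈ S,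
      (xA, xB) ≠ (xA', xB') ∧ r = ‖(xA - xA') + z * (xB - xB')‖} with hB
  have hBbdd : BddBelow B := by
    refine ⟨0, fun r hr => ?_⟩
    obtain ⟨_, _, _, _, _, _, _, _, _, hr⟩ := hr
    rw [hr]; exact norm_nonneg _
  have hCfin : C.Finite := by
    apply Set.Finite.subset (Finset.finite_toSet
      ((S ×ˢ S).image (fun p => ‖p.1 - p.2‖)))
    rintro r ⟨x, hx, x', hx', _, rfl⟩
    simp only [Finset.coe_image, Set.mem_image, Finset.mem_coe, Finset.mem_product]
    exact ⟨(x, x'), ⟨hx, hx'⟩, rfl⟩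
  have hCne : C.Nonempty := ⟨‖a - b‖, a, ha, b, hb, hab, rfl⟩
  have hdmem : dminS ∈ C := hdminS ▸ hCne.csInf_mem hCfin
  obtain ⟨x, hx, x', hx', hxx', hdval⟩ := hdmem
  -- Membership of dminS and |z| * dminS in A
  have hAfin : A.Finite := by
    apply Set.Finite.subset (Finset.finite_toSet
      (((S ×ˢ S) ×ˢ (S ×ˢ S)).image
        (fun p => ‖(p.1.1 - p.2.1) + z * (p.1.2 - p.2.2)‖)))
    rintro r ⟨xA, h1, xB, h2, xA', h3, xB', h4, _, rfl⟩
    simp only [Finset.coe_image, Set.mem_image, Finset.mem_coe, Finset.mem_product]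
    exact ⟨((xA, xB), (xA', xB')), ⟨⟨h1, h2⟩, ⟨h3, h4⟩⟩, rfl⟩
  have hmem1 : dminS ∈ A := by
    refine ⟨x, hx, x, hx, x', hx', x, hx, hex1 x hx x' hx' x hx hxx', ?_⟩
    rw [hdval]; ring_nf
  have hmem2 : ‖z‖ * dminS ∈ A := by
    refine ⟨x, hx, x, hx, x, hx, x', hx', hex2 x hx x hx x' hx' hxx', ?_⟩
    rw [hdval, ← norm_mul]; ring_nf
  have hABdd : BddBelow A := by
    refine ⟨0, fun r hr => ?_⟩
    obtain ⟨_, _, _, _, _, _, _, _, _, hr⟩ := hr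
    rw [hr]; exact norm_nonneg _
  refine le_antisymm ?_ ?_
  · exact le_min (csInf_le hABdd hmem1) (csInf_le hABdd hmem2)
  · refine le_csInf ⟨dminS, hmem1⟩ ?_
    rintro r ⟨xA, h1, xB, h2, xA', h3, xB', h4, hne, rfl⟩
    have hneq : (xA, xB) ≠ (xA', xB') := by
      intro h; apply hne
      simp only [Prod.mk.injEq] at h
      rw [h.1, h.2]
    have hrB : ‖(xA - xA') + z * (xB - xB')‖ ∈ B :=
      ⟨xA, h1, xB, h2, xA', h3, xB', h4, hneq, rfl⟩
    calc min dminS (‖z‖ * dminS) ≤ dminz := hbig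
      _ ≤ _ := hdminz ▸ csInf_le hBbdd hrB
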